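/- For every ε > 0 there exist finite collections X of finite sets such that the number of triples (A₁, A₂, A) ∈ X³ with A = A₁ ⊎ A₂ exceeds |X|^(3/p - ε), where p = log_3(27/4). Concretely, taking X to be all subsets of {1,…,n} of cardinality n/3 or 2n/3 (n a multiple of 3), the count of such triples is n!/((n/3)!)³ while |X| = 2·n!/((n/3)!·(2n/3)!). -/

import Mathlib

open Finset
set_option maxHeartbeats 1000000

section AuxForStmt1

-- ratio facts
lemma aux_up (k i : ℕ) (hi : k ≤ i) :
    Nat.choose (3*k) (i+1) ≤ 2 * Nat.choose (3*k) i := by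
  rcases le_or_gt (i+1) (3*k) with h | h
  · have h1 := Nat.choose_succ_right_eq (3*k) i
    have h2 : 3*k - i ≤ 2 * (i+1) := by omega
    have h3 : Nat.choose (3*k) (i+1) * (i+1) ≤ (2 * Nat.choose (3*k) i) * (i+1) := by
      calc Nat.choose (3*k) (i+1) * (i+1) = Nat.choose (3*k) i * (3*k - i) := h1
        _ ≤ Nat.choose (3*k) i * (2 * (i+1)) := Nat.mul_le_mul_left _ h2
        _ = (2 * Nat.choose (3*k) i) * (i+1) := by ring
    exact Nat.le_of_mul_le_mul_right h3 (Nat.succ_pos i)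
  · rw [Nat.choose_eq_zero_of_lt h]; exact Nat.zero_le _

lemma aux_down (k i : ℕ) (hi : i < k) :
    2 * Nat.choose (3*k) i ≤ Nat.choose (3*k) (i+1) := by
  have h1 := Nat.choose_succ_right_eq (3*k) i
  have h2 : 2 * (i+1) ≤ 3*k - i := by omega
  have h3 : (2 * Nat.choose (3*k) i) * (i+1) ≤ Nat.choose (3*k) (i+1) * (i+1) := by
    calc (2 * Nat.choose (3*k) i) * (i+1) = Nat.choose (3*k) i * (2 * (i+1)) := by ring
      _ ≤ Nat.choose (3*k) i * (3*k - i) := Nat.mul_le_mul_left _ h2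
      _ = Nat.choose (3*k) (i+1) * (i+1) := h1.symm
  exact Nat.le_of_mul_le_mul_right h3 (Nat.succ_pos i)

lemma aux_f_up (k : ℕ) : ∀ j, Nat.choose (3*k) (k+j) * 2^(3*k - (k+j)) ≤ Nat.choose (3*k) k * 2^(2*k)
  | 0 => by simp [show 3*k - k = 2*k by omega]
  | (j+1) => by
    rcases le_or_gt (k+j+1) (3*k) with h | h
    · have e : 3*k - (k+j) = (3*k - (k+j+1)) + 1 := by omega
      calc Nat.choose (3*k) (k+(j+1)) * 2^(3*k - (k+(j+1)))
          ≤ (2 * Nat.choose (3*k) (k+j)) * 2^(3*k - (k+j+1)) := by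
            have := aux_up k (k+j) (Nat.le_add_right _ _)
            exact Nat.mul_le_mul_right _ (by simpa [Nat.add_assoc] using this)
        _ = Nat.choose (3*k) (k+j) * 2^(3*k - (k+j)) := by rw [e]; ring
        _ ≤ Nat.choose (3*k) k * 2^(2*k) := aux_f_up k j
    · rw [show k+(j+1) = k+j+1 by ring, Nat.choose_eq_zero_of_lt h]; simp

lemma aux_f_down (k : ℕ) : ∀ j, j ≤ k → Nat.choose (3*k) (k-j) * 2^(3*k - (k-j)) ≤ Nat.choose (3*k) k * 2^(2*k)
  | 0, _ => by simp [show 3*k - k = 2*k by omega]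
  | (j+1), hj => by
    have hi : k-(j+1) < k := by omega
    have e1 : k - (j+1) + 1 = k - j := by omega
    have e2 : 3*k - (k-(j+1)) = (3*k - (k-j)) + 1 := by omega
    calc Nat.choose (3*k) (k-(j+1)) * 2^(3*k - (k-(j+1)))
        = (2 * Nat.choose (3*k) (k-(j+1))) * 2^(3*k - (k-j)) := by rw [e2]; ring
      _ ≤ Nat.choose (3*k) (k-j) * 2^(3*k - (k-j)) := by
          have := aux_down k (k-(j+1)) hi
          rw [e1] at this
          exact Nat.mul_le_mul_right _ this
      _ ≤ Nat.choose (3*k) k * 2^(2*k) := aux_f_down k j (by omega)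

lemma aux_f_le (k i : ℕ) : Nat.choose (3*k) i * 2^(3*k - i) ≤ Nat.choose (3*k) k * 2^(2*k) := by
  rcases le_or_gt i k with h | h
  · have := aux_f_down k (k - i) (Nat.sub_le _ _)
    rwa [Nat.sub_sub_self h] at this
  · have := aux_f_up k (i - k)
    rwa [Nat.add_sub_cancel' h.le] at this

lemma aux_sum_f (k : ℕ) : ∑ i ∈ range (3*k+1), Nat.choose (3*k) i * 2^(3*k - i) = 3^(3*k) := by
  have := add_pow (1:ℕ) 2 (3*k)
  simp only [one_pow, one_mul] at this
  norm_num at this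
  rw [this]
  exact Finset.sum_congr rfl (fun i _ => by ring)

lemma lemB2 (k : ℕ) : 3^(3*k) ≤ (3*k+1) * (Nat.choose (3*k) k * 4^k) := by
  have h4 : (4:ℕ)^k = 2^(2*k) := by rw [show (4:ℕ) = 2^2 by norm_num, ← pow_mul]
  rw [h4, ← aux_sum_f k]
  calc ∑ i ∈ range (3*k+1), Nat.choose (3*k) i * 2^(3*k - i)
      ≤ ∑ _i ∈ range (3*k+1), Nat.choose (3*k) k * 2^(2*k) :=
        Finset.sum_le_sum (fun i _ => aux_f_le k i)
    _ = (3*k+1) * (Nat.choose (3*k) k * 2^(2*k)) := by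
        rw [Finset.sum_const, card_range, smul_eq_mul]

lemma lemB3 (k : ℕ) : Nat.choose (3*k) k * 4^k ≤ 3^(3*k) := by
  have h4 : (4:ℕ)^k = 2^(2*k) := by rw [show (4:ℕ) = 2^2 by norm_num, ← pow_mul]
  rw [h4, ← aux_sum_f k]
  have hk : k ∈ range (3*k+1) := mem_range.2 (by omega)
  have := Finset.single_le_sum (f := fun i => Nat.choose (3*k) i * 2^(3*k - i))
    (fun i _ => Nat.zero_le _) hk
  simpa [show 3*k - k = 2*k by omega] using this

lemma card_X (k : ℕ) (hk : 0 < k)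
    (X : Finset (Finset ℕ))
    (hX : X = (Finset.range (3*k)).powerset.filter
      (fun A => A.card = k ∨ A.card = 2*k)) :
    X.card = 2 * Nat.choose (3*k) k := by
  have hsplit : X = powersetCard k (range (3*k)) ∪ powersetCard (2*k) (range (3*k)) := by
    rw [hX, Finset.filter_or, powersetCard_eq_filter, powersetCard_eq_filter]
  have hdisj : Disjoint (powersetCard k (range (3*k))) (powersetCard (2*k) (range (3*k))) := by
    rw [Finset.disjoint_left]
    intro A h1 h2
    rw [mem_powersetCard] at h1 h2
    omega
  rw [hsplit, card_union_of_disjoint hdisj, card_powersetCard, card_powersetCard,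
    card_range]
  have : (3*k).choose (2*k) = (3*k).choose k := by
    rw [show 2*k = 3*k - k by omega, Nat.choose_symm (by omega)]
  omega

lemma count_triples (k : ℕ) (hk : 0 < k)
    (X : Finset (Finset ℕ))
    (hX : X = (Finset.range (3*k)).powerset.filter
      (fun A => A.card = k ∨ A.card = 2*k)) :
    ((X ×ˢ X ×ˢ X).filter
        (fun t => Disjoint t.1 t.2.1 ∧ t.1 ∪ t.2.1 = t.2.2)).card
      = Nat.choose (3*k) k * Nat.choose (2*k) k := by
  set n := 3*k with hn
  set S : Finset (Finset ℕ × Finset ℕ) :=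
    (powersetCard k (range n) ×ˢ powersetCard k (range n)).filter
      (fun p => Disjoint p.1 p.2) with hS
  have key : (X ×ˢ X ×ˢ X).filter
      (fun t => Disjoint t.1 t.2.1 ∧ t.1 ∪ t.2.1 = t.2.2)
      = S.image (fun p => (p.1, p.2, p.1 ∪ p.2)) := by
    ext ⟨A, B, C⟩
    simp only [hS, mem_filter, mem_product, mem_image, hX, mem_powerset,
      mem_powersetCard, Prod.exists, Prod.mk.injEq]
    constructor
    · rintro ⟨⟨⟨hA, hcA⟩, ⟨hB, hcB⟩, ⟨hC, hcC⟩⟩, hd, hu⟩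
      have hcard : C.card = A.card + B.card := by
        rw [← hu]; exact card_union_of_disjoint hd
      have hAk : A.card = k ∧ B.card = k := by omega
      exact ⟨A, B, ⟨⟨⟨hA, hAk.1⟩, hB, hAk.2⟩, hd⟩, rfl, rfl, hu⟩
    · rintro ⟨A', B', ⟨⟨⟨hA, hcA⟩, hB, hcB⟩, hd⟩, rfl, rfl, rfl⟩
      refine ⟨⟨⟨hA, Or.inl hcA⟩, ⟨hB, Or.inl hcB⟩, ⟨union_subset hA hB, Or.inr ?_⟩⟩, hd, rfl⟩
      rw [card_union_of_disjoint hd, hcA, hcB]; ring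
  have hinj : Function.Injective (fun p : Finset ℕ × Finset ℕ => (p.1, p.2, p.1 ∪ p.2)) := by
    intro p q h
    simp only [Prod.mk.injEq] at h
    exact Prod.ext h.1 h.2.1
  rw [key, card_image_of_injective _ hinj]
  -- now compute S.card
  have hSb : S = (powersetCard k (range n)).biUnion
      (fun A => ({A} ×ˢ powersetCard k (range n \ A))) := by
    ext ⟨A, B⟩
    simp only [hS, mem_filter, mem_product, mem_biUnion, mem_powersetCard,
      mem_singleton, subset_sdiff, Prod.mk.injEq]
    constructor
    · rintro ⟨⟨⟨hA, hcA⟩, hB, hcB⟩, hd⟩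
      exact ⟨A, ⟨hA, hcA⟩, rfl, ⟨hB, hd.symm⟩, hcB⟩
    · rintro ⟨A', ⟨hA, hcA⟩, rfl, ⟨hB, hd⟩, hcB⟩
      exact ⟨⟨⟨hA, hcA⟩, hB, hcB⟩, hd.symm⟩
  rw [hSb, card_biUnion]
  · have : ∀ A ∈ powersetCard k (range n), ({A} ×ˢ powersetCard k (range n \ A)).card
        = Nat.choose (2*k) k := by
      intro A hA
      rw [mem_powersetCard] at hA
      rw [card_product, card_singleton, one_mul, card_powersetCard, card_sdiff_of_subset hA.1,
        card_range, hA.2, show 3*k - k = 2*k by omega]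
    rw [Finset.sum_congr rfl this, Finset.sum_const, card_powersetCard, card_range,
      smul_eq_mul]
  · intro A hA A' hA' hne
    rw [Function.onFun, Finset.disjoint_left]
    rintro ⟨x, y⟩ h1 h2
    simp only [mem_product, mem_singleton] at h1 h2
    exact hne (h1.1 ▸ h2.1 ▸ rfl)
lemma pow_rpow_comm (x : ℝ) (hx : 0 ≤ x) (n : ℕ) (y : ℝ) :
    (x ^ n) ^ y = (x ^ y) ^ n := by
  rw [← Real.rpow_natCast x n, ← Real.rpow_mul hx, mul_comm, Real.rpow_mul hx,
    Real.rpow_natCast]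

lemma key_rpow : ((27:ℝ)/4) ^ (3 / (Real.log (27/4) / Real.log 3)) = 27 := by
  have h3 : (0:ℝ) < Real.log 3 := Real.log_pos (by norm_num)
  have h27 : (0:ℝ) < Real.log ((27:ℝ)/4) := Real.log_pos (by norm_num)
  rw [Real.rpow_def_of_pos (by norm_num)]
  have he : Real.log ((27:ℝ)/4) * (3 / (Real.log ((27:ℝ)/4) / Real.log 3))
      = 3 * Real.log 3 := by
    field_simp
  rw [he, show (3:ℝ) * Real.log 3 = Real.log ((3:ℝ)^(3:ℕ)) by
      rw [Real.log_pow]; norm_num,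
    Real.exp_log (by norm_num)]
  norm_num

lemma part1 (ε : ℝ) (hε : 0 < ε) : ∃ X : Finset (Finset ℕ),
    ((X.card : ℝ) ^ (3 / (Real.log (27 / 4) / Real.log 3) - ε) <
      (((X ×ˢ X ×ˢ X).filter
        (fun t => Disjoint t.1 t.2.1 ∧ t.1 ∪ t.2.1 = t.2.2)).card : ℝ)) := by
  have h3 : (0:ℝ) < Real.log 3 := Real.log_pos (by norm_num)
  have h27 : (0:ℝ) < Real.log ((27:ℝ)/4) := Real.log_pos (by norm_num)
  set q := 3 / (Real.log ((27:ℝ)/4) / Real.log 3) with hqdef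
  have hq : 0 < q := div_pos (by norm_num) (div_pos h27 h3)
  have h2q : (0:ℝ) < 2^q := Real.rpow_pos_of_pos (by norm_num) q
  set ε' := min ε 1 with hε'def
  have hε'0 : 0 < ε' := lt_min hε one_pos
  have hε'1 : ε' ≤ 1 := min_le_right _ _
  have hε'ε : ε' ≤ ε := min_le_left _ _
  set B := ((27:ℝ)/4) ^ ε' with hBdef
  have hB1 : 1 < B := (Real.one_lt_rpow_iff_of_pos (by norm_num)).2
    (Or.inl ⟨by norm_num, hε'0⟩)
  have hB0 : (0:ℝ) < B := lt_trans one_pos hB1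
  have htend := tendsto_pow_const_mul_const_pow_of_lt_one 3
    (le_of_lt (inv_pos.2 hB0)) (inv_lt_one_of_one_lt₀ hB1)
  have hev : ∀ᶠ (n:ℕ) in Filter.atTop, (n:ℝ)^3 * (B⁻¹)^n < (32 * 2^q + 1)⁻¹ :=
    htend.eventually_lt_const (by positivity)
  obtain ⟨k, hk1, hksm⟩ := ((Filter.eventually_ge_atTop 1).and hev).exists
  have hkpos : 0 < k := hk1
  refine ⟨(Finset.range (3*k)).powerset.filter
    (fun A => A.card = k ∨ A.card = 2*k), ?_⟩
  rw [card_X k hkpos _ rfl, count_triples k hkpos _ rfl]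
  set a := (Nat.choose (3*k) k : ℝ) with hadef
  set b := (Nat.choose (2*k) k : ℝ) with hbdef
  push_cast
  -- basic positivity
  have ha1 : (1:ℝ) ≤ a := by
    rw [hadef]; exact_mod_cast Nat.one_le_iff_ne_zero.2 (Nat.choose_pos (by omega)).ne'
  have hk0 : (1:ℝ) ≤ (k:ℝ) := by exact_mod_cast hk1
  have h3k1 : (0:ℝ) < 3*(k:ℝ)+1 := by positivity
  have h4k : (0:ℝ) < (4:ℝ)^k := by positivity
  -- cast the Nat bounds
  have f1 : (27:ℝ)^k ≤ (3*(k:ℝ)+1) * (a * 4^k) := by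
    have h := lemB2 k
    have h' : ((3:ℝ))^(3*k) ≤ ((3*k+1 : ℕ):ℝ) * ((Nat.choose (3*k) k : ℝ) * 4^k) := by
      exact_mod_cast h
    calc (27:ℝ)^k = (3:ℝ)^(3*k) := by rw [pow_mul]; norm_num
      _ ≤ _ := h'
      _ = (3*(k:ℝ)+1) * (a * 4^k) := by push_cast; ring
  have f2 : a * 4^k ≤ (27:ℝ)^k := by
    have h := lemB3 k
    have h' : (Nat.choose (3*k) k : ℝ) * 4^k ≤ ((3:ℝ))^(3*k) := by exact_mod_cast h
    calc a * 4^k ≤ (3:ℝ)^(3*k) := h'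
      _ = (27:ℝ)^k := by rw [pow_mul]; norm_num
  have f3 : (4:ℝ)^k ≤ (2*(k:ℝ)) * b := by
    have h := Nat.four_pow_le_two_mul_self_mul_centralBinom k hkpos
    have h' : ((4:ℝ))^k ≤ ((2*k : ℕ):ℝ) * ((Nat.centralBinom k : ℕ):ℝ) := by
      exact_mod_cast h
    rw [hbdef]
    calc (4:ℝ)^k ≤ ((2*k : ℕ):ℝ) * ((Nat.centralBinom k : ℕ):ℝ) := h'
      _ = (2*(k:ℝ)) * (Nat.choose (2*k) k : ℝ) := by rw [Nat.centralBinom]; push_cast; ring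
  set u := ((27:ℝ)/4)^k / (3*(k:ℝ)+1) with hu
  have hu0 : (0:ℝ) < u := by positivity
  have hua : u ≤ a := by
    rw [hu, div_pow, div_div, div_le_iff₀ (by positivity)]
    calc (27:ℝ)^k ≤ (3*(k:ℝ)+1) * (a * 4^k) := f1
      _ = a * ((4:ℝ)^k * (3*(k:ℝ)+1)) := by ring
  have hab : a ≤ ((27:ℝ)/4)^k := by
    rw [div_pow, le_div_iff₀ h4k]; exact f2
  have hb : (4:ℝ)^k/(2*(k:ℝ)) ≤ b := by
    rw [div_le_iff₀ (by positivity)]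
    calc (4:ℝ)^k ≤ (2*(k:ℝ)) * b := f3
      _ = b * (2*(k:ℝ)) := by ring
  have ha0 : (0:ℝ) < 2*a := by linarith
  -- chain
  have c1 : (2*a)^(q-ε) ≤ (2*a)^(q-ε') :=
    Real.rpow_le_rpow_of_exponent_le (by linarith) (by linarith)
  have c2 : (2*a)^(q-ε') = (2*a)^q / (2*a)^ε' := Real.rpow_sub ha0 _ _
  have c3 : (2*a)^q ≤ (2*((27:ℝ)/4)^k)^q :=
    Real.rpow_le_rpow (by linarith) (by linarith) hq.le
  have c4 : (2*((27:ℝ)/4)^k)^q = 2^q * (27:ℝ)^k := by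
    rw [Real.mul_rpow (by norm_num) (by positivity),
      pow_rpow_comm _ (by norm_num), hqdef, key_rpow]
  have c5 : u^ε' ≤ (2*a)^ε' :=
    Real.rpow_le_rpow hu0.le (by linarith) hε'0.le
  have c6 : B^k / (3*(k:ℝ)+1) ≤ u^ε' := by
    rw [hu, Real.div_rpow (by positivity) h3k1.le,
      pow_rpow_comm _ (by norm_num), ← hBdef]
    have h7 : (3*(k:ℝ)+1)^ε' ≤ 3*(k:ℝ)+1 := by
      calc (3*(k:ℝ)+1)^ε' ≤ (3*(k:ℝ)+1)^(1:ℝ) :=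
        Real.rpow_le_rpow_of_exponent_le (by linarith) hε'1
        _ = 3*(k:ℝ)+1 := Real.rpow_one _
    exact div_le_div_of_nonneg_left (by positivity) (by positivity) h7
  have hd0 : (0:ℝ) < B^k / (3*(k:ℝ)+1) := by positivity
  have hT : (27:ℝ)^k / ((3*(k:ℝ)+1)*(2*(k:ℝ))) ≤ a*b := by
    have he : u * ((4:ℝ)^k/(2*(k:ℝ))) = (27:ℝ)^k / ((3*(k:ℝ)+1)*(2*(k:ℝ))) := by
      rw [hu, div_pow]
      field_simp
    rw [← he]
    exact mul_le_mul hua hb (by positivity) (by linarith)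
  have hkey : (32 * 2^q + 1) * (k:ℝ)^3 < B^k := by
    have hBk : (0:ℝ) < B^k := by positivity
    have e : (k:ℝ)^3 * (B⁻¹)^k = (k:ℝ)^3 / B^k := by
      rw [inv_pow, div_eq_mul_inv]
    rw [e, div_lt_iff₀ hBk] at hksm
    have hpos : (0:ℝ) < 32 * 2^q + 1 := by positivity
    calc (32 * 2^q + 1) * (k:ℝ)^3 < (32 * 2^q + 1) * ((32 * 2^q + 1)⁻¹ * B^k) := by
          exact mul_lt_mul_of_pos_left hksm hpos
      _ = B^k := by field_simp
  have hfin : 2^q * (27:ℝ)^k / (B^k/(3*(k:ℝ)+1)) < (27:ℝ)^k / ((3*(k:ℝ)+1)*(2*(k:ℝ))) := by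
    rw [div_div_eq_mul_div, div_lt_div_iff₀ (by positivity) (by positivity)]
    have h27k : (0:ℝ) < (27:ℝ)^k := by positivity
    have hpoly : (3*(k:ℝ)+1) * ((3*(k:ℝ)+1)*(2*(k:ℝ))) ≤ 32 * (k:ℝ)^3 := by
      nlinarith [hk0, mul_nonneg (mul_nonneg (by linarith : (0:ℝ) ≤ (k:ℝ))
        (by linarith : (0:ℝ) ≤ (k:ℝ)-1)) (by linarith : (0:ℝ) ≤ 7*(k:ℝ)+1)]
    have step1 : 2^q * (3*(k:ℝ)+1) * ((3*(k:ℝ)+1)*(2*(k:ℝ))) ≤ 32 * 2^q * (k:ℝ)^3 := by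
      calc 2^q * (3*(k:ℝ)+1) * ((3*(k:ℝ)+1)*(2*(k:ℝ)))
          = 2^q * ((3*(k:ℝ)+1) * ((3*(k:ℝ)+1)*(2*(k:ℝ)))) := by ring
        _ ≤ 2^q * (32 * (k:ℝ)^3) := mul_le_mul_of_nonneg_left hpoly h2q.le
        _ = 32 * 2^q * (k:ℝ)^3 := by ring
    have step2 : 32 * 2^q * (k:ℝ)^3 < B^k := by
      have hk3 : (0:ℝ) < (k:ℝ)^3 := by positivity
      linarith [hkey]
    calc 2^q * (27:ℝ)^k * (3*(k:ℝ)+1) * ((3*(k:ℝ)+1)*(2*(k:ℝ)))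
        = (27:ℝ)^k * (2^q * (3*(k:ℝ)+1) * ((3*(k:ℝ)+1)*(2*(k:ℝ)))) := by ring
      _ ≤ (27:ℝ)^k * (32 * 2^q * (k:ℝ)^3) := by
          exact mul_le_mul_of_nonneg_left step1 h27k.le
      _ < (27:ℝ)^k * B^k := mul_lt_mul_of_pos_left step2 h27k
  calc (2*a)^(q-ε) ≤ (2*a)^(q-ε') := c1
    _ = (2*a)^q / (2*a)^ε' := c2
    _ ≤ (2^q * (27:ℝ)^k) / (B^k/(3*(k:ℝ)+1)) :=
        div_le_div₀ (by positivity) (c4 ▸ c3) hd0 (le_trans c6 c5)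
    _ < (27:ℝ)^k / ((3*(k:ℝ)+1)*(2*(k:ℝ))) := hfin
    _ ≤ a*b := hT

lemma part2 : (∀ n : ℕ, 0 < n → 3 ∣ n →
      ∀ X : Finset (Finset ℕ),
        X = (Finset.range n).powerset.filter
              (fun A => A.card = n / 3 ∨ A.card = 2 * n / 3) →
        ((X ×ˢ X ×ˢ X).filter
          (fun t => Disjoint t.1 t.2.1 ∧ t.1 ∪ t.2.1 = t.2.2)).card
            = n.factorial / ((n / 3).factorial) ^ 3 ∧
        X.card = 2 * (n.factorial / ((n / 3).factorial * ((2 * n / 3).factorial)))) := by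
  rintro n hn ⟨k, rfl⟩ X hX
  have hk : 0 < k := by omega
  have e1 : 3*k/3 = k := by omega
  have e2 : 2*(3*k)/3 = 2*k := by omega
  rw [e1, e2] at hX ⊢
  constructor
  · rw [count_triples k hk X hX]
    have h1 := Nat.choose_mul_factorial_mul_factorial (show k ≤ 3*k by omega)
    have h2 := Nat.choose_mul_factorial_mul_factorial (show k ≤ 2*k by omega)
    rw [show 3*k - k = 2*k by omega] at h1
    rw [show 2*k - k = k by omega] at h2
    have key : (3*k).factorial
        = (Nat.choose (3*k) k * Nat.choose (2*k) k) * (k.factorial)^3 := by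
      calc (3*k).factorial = Nat.choose (3*k) k * k.factorial * (2*k).factorial := h1.symm
        _ = Nat.choose (3*k) k * k.factorial
              * (Nat.choose (2*k) k * k.factorial * k.factorial) := by rw [h2]
        _ = _ := by ring
    rw [key, Nat.mul_div_cancel _ (by positivity)]
  · rw [card_X k hk X hX,
      Nat.choose_eq_factorial_div_factorial (show k ≤ 3*k by omega),
      show 3*k - k = 2*k by omega]

end AuxForStmt1

theorem stmt_1 :
    (∀ ε : ℝ, 0 < ε → ∃ X : Finset (Finset ℕ),
      ((X.card : ℝ) ^ (3 / (Real.log (27 / 4) / Real.log 3) - ε) <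
        (((X ×ˢ X ×ˢ X).filter
          (fun t => Disjoint t.1 t.2.1 ∧ t.1 ∪ t.2.1 = t.2.2)).card : ℝ))) ∧
    (∀ n : ℕ, 0 < n → 3 ∣ n →
      ∀ X : Finset (Finset ℕ),
        X = (Finset.range n).powerset.filter
              (fun A => A.card = n / 3 ∨ A.card = 2 * n / 3) →
        ((X ×ˢ X ×ˢ X).filter
          (fun t => Disjoint t.1 t.2.1 ∧ t.1 ∪ t.2.1 = t.2.2)).card
            = n.factorial / ((n / 3).factorial) ^ 3 ∧
        X.card = 2 * (n.factorial / ((n / 3).factorial * ((2 * n / 3).factorial)))) := by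
  exact ⟨part1, part2⟩
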